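/- For fixed x ∈ (1,2), the map Pe ↦ T_Pe(x) = (e^{Pe(x−1)} − 1)/(e^{Pe} − 1) is strictly decreasing in Pe on (0,∞). -/

import Mathlib

lemma aux_exp_ineq (b : ℝ) (hb0 : 0 < b) (hb1 : b < 1) {P : ℝ} (hP : 0 < P) :
    Real.exp (b * P) - b * Real.exp P < 1 - b := by
  have hanti : StrictAntiOn (fun P : ℝ => Real.exp (b * P) - b * Real.exp P) (Set.Ici 0) := by
    apply strictAntiOn_of_deriv_neg (convex_Ici 0)
    · fun_prop
    · intro y hy
      rw [interior_Ici] at hy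
      have h1 : HasDerivAt (fun P : ℝ => Real.exp (b * P)) (Real.exp (b * y) * b) y := by
        exact ((Real.hasDerivAt_exp (b * y)).comp y ((hasDerivAt_id y).const_mul b)).congr_deriv (by simp)
      have h2 : HasDerivAt (fun P : ℝ => b * Real.exp P) (b * Real.exp y) y :=
        (Real.hasDerivAt_exp y).const_mul b
      have hd := h1.sub h2
      rw [show deriv (fun P : ℝ => Real.exp (b * P) - b * Real.exp P) y = _ from hd.deriv]
      have hlt : Real.exp (b * y) < Real.exp y := Real.exp_lt_exp.2 (by nlinarith [mul_pos (show (0:ℝ) < 1 - b by linarith) (Set.mem_Ioi.1 hy)])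
      nlinarith
  have h := hanti (Set.self_mem_Ici) (Set.mem_Ici.2 hP.le) hP
  simpa using h

theorem stmt_6 (x : ℝ) (hx : x ∈ Set.Ioo (1:ℝ) 2) :
    StrictAntiOn (fun Pe : ℝ => (Real.exp (Pe * (x - 1)) - 1) / (Real.exp Pe - 1))
      (Set.Ioi (0:ℝ)) := by
  obtain ⟨hx1, hx2⟩ := hx
  apply strictAntiOn_of_deriv_neg (convex_Ioi 0)
  · apply ContinuousOn.div
    · fun_prop
    · fun_prop
    · intro y hy
      have hB : 1 < Real.exp y := by nlinarith [Real.add_one_le_exp y, Set.mem_Ioi.1 hy]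
      exact sub_ne_zero_of_ne (ne_of_gt hB)
  · intro y hy
    rw [interior_Ioi] at hy
    have hy0 : (0:ℝ) < y := hy
    have hB : 1 < Real.exp y := by nlinarith [Real.add_one_le_exp y]
    have hvne : Real.exp y - 1 ≠ 0 := sub_ne_zero_of_ne (ne_of_gt hB)
    have hu : HasDerivAt (fun P : ℝ => Real.exp (P * (x - 1)) - 1)
        (Real.exp (y * (x - 1)) * (x - 1)) y := by
      simpa using
        (((Real.hasDerivAt_exp (y * (x - 1))).comp y
          ((hasDerivAt_id y).mul_const (x - 1))).sub_const 1)
    have hv : HasDerivAt (fun P : ℝ => Real.exp P - 1) (Real.exp y) y :=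
      (Real.hasDerivAt_exp y).sub_const 1
    have hd := hu.div hv hvne
    rw [show deriv (fun Pe : ℝ => (Real.exp (Pe * (x - 1)) - 1) / (Real.exp Pe - 1)) y = _ from hd.deriv]
    apply div_neg_of_neg_of_pos
    · -- numerator negative
      have hC : 0 < Real.exp (y * (x - 1)) := Real.exp_pos _
      have haux : Real.exp ((2 - x) * y) - (2 - x) * Real.exp y < 1 - (2 - x) :=
        aux_exp_ineq (2 - x) (by linarith) (by linarith) hy0
      have hAC : Real.exp ((2 - x) * y) * Real.exp (y * (x - 1)) = Real.exp y := by
        rw [← Real.exp_add]; congr 1; ring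
      have hm := mul_lt_mul_of_pos_right haux hC
      nlinarith [hm, hAC]
    · positivity
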